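/- Let T be a finite tree, let k be a positive natural number, and let X be a set of vertices of T with |X| ≥ k². Then either T contains a path P with |X ∩ V(P)| ≥ k, or T contains a subtree S whose set L of leaves satisfies |X ∩ L| ≥ k. -/

import Mathlib

open SimpleGraph Walk

section Aux

variable {V : Type*} {T : SimpleGraph V}

/-- The canonical path between two vertices of a tree. -/
noncomputable def treePth (hT : T.IsTree) (r v : V) : T.Walk r v :=
  (hT.existsUnique_path r v).choose

lemma treePth_isPath (hT : T.IsTree) (r v : V) : (treePth hT r v).IsPath :=
  (hT.existsUnique_path r v).choose_spec.1

lemma treePth_unique (hT : T.IsTree) {r v : V} (q : T.Walk r v) (hq : q.IsPath) :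
    q = treePth hT r v :=
  ((hT.existsUnique_path r v).choose_spec.2 q hq).trans rfl

lemma treePth_takeUntil [DecidableEq V] (hT : T.IsTree) {r v c : V}
    (hc : c ∈ (treePth hT r v).support) :
    treePth hT r c = (treePth hT r v).takeUntil c hc :=
  (treePth_unique hT _ ((treePth_isPath hT r v).takeUntil hc)).symm

lemma support_treePth_subset [DecidableEq V] (hT : T.IsTree) {r v c : V}
    (hc : c ∈ (treePth hT r v).support) :
    ∀ x ∈ (treePth hT r c).support, x ∈ (treePth hT r v).support := by
  rw [treePth_takeUntil hT hc]
  exact fun x hx => (treePth hT r v).support_takeUntil_subset hc hx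

lemma end_not_mem_treePth [DecidableEq V] (hT : T.IsTree) {r v c : V}
    (hc : c ∈ (treePth hT r v).support) (hne : c ≠ v) :
    v ∉ (treePth hT r c).support := by
  rw [treePth_takeUntil hT hc]
  intro hv
  have hnodup := (treePth_isPath hT r v).support_nodup
  rw [← (treePth hT r v).take_spec hc, support_append] at hnodup
  have hvd : v ∈ ((treePth hT r v).dropUntil c hc).support.tail := by
    have hvmem : v ∈ ((treePth hT r v).dropUntil c hc).support := end_mem_support _
    rw [support_eq_cons] at hvmem
    rcases List.mem_cons.1 hvmem with h | h
    · exact absurd h.symm hne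
    · exact h
  exact (List.disjoint_of_nodup_append hnodup) hv hvd

lemma reach_induce {S : Set V} :
    ∀ {u v : V} (w : T.Walk u v) (hu : u ∈ S) (hv : v ∈ S),
      (∀ x ∈ w.support, x ∈ S) → (T.induce S).Reachable ⟨u, hu⟩ ⟨v, hv⟩ := by
  intro u v w
  induction w with
  | nil => exact fun _ _ _ => Reachable.refl _
  | @cons u b v h p ih =>
    intro hu hv hw
    have hb : b ∈ S := hw b (by simp)
    have hadj : (T.induce S).Adj ⟨u, hu⟩ ⟨b, hb⟩ := by
      simp only [comap_adj, Function.Embedding.coe_subtype]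
      exact h
    exact hadj.reachable.trans (ih hb hv fun x hx => hw x (by simp [hx]))

end Aux

/-- Let `T` be a finite tree and `X` a set of vertices with `|X| ≥ k²` (`k > 0`).
Then either `T` contains a path `P` with `|X ∩ V(P)| ≥ k`, or `T` contains a
subtree `S` such that at least `k` leaves of `S` belong to `X`. -/
theorem tree_path_or_leafy_subtree {V : Type*} [Fintype V]
    (T : SimpleGraph V) (hT : T.IsTree) (k : ℕ) (hk : 0 < k)
    (X : Set V) (hX : k ^ 2 ≤ X.ncard) :
    (∃ (u v : V) (P : T.Walk u v), P.IsPath ∧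
        k ≤ (X ∩ {x : V | x ∈ P.support}).ncard) ∨
      (∃ S : Set V, S.Nonempty ∧ (T.induce S).Connected ∧
        k ≤ (X ∩ {x : V | x ∈ S ∧ ∃! y, y ∈ S ∧ T.Adj x y}).ncard) := by
  classical
  by_contra hcon
  push_neg at hcon
  obtain ⟨h1, h2⟩ := hcon
  -- X is nonempty
  have hXne : X.Nonempty := by
    rw [← Set.ncard_pos X.toFinite]
    have : 0 < k ^ 2 := by positivity
    omega
  obtain ⟨r, hrX⟩ := hXne
  -- the k = 1 case is already contradictory
  have hk2 : 2 ≤ k := by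
    rcases Nat.lt_or_ge k 2 with h | h
    · exfalso
      have hk1 : k = 1 := by omega
      have := h1 r r Walk.nil IsPath.nil
      have hmem : r ∈ X ∩ {x : V | x ∈ (Walk.nil : T.Walk r r).support} := by
        constructor
        · exact hrX
        · simp
      have : 0 < (X ∩ {x : V | x ∈ (Walk.nil : T.Walk r r).support}).ncard :=
        (Set.ncard_pos (Set.toFinite _)).2 ⟨r, hmem⟩
      omega
    · exact h
  -- depth function
  set d : V → ℕ := fun v => (X ∩ {x : V | x ∈ (treePth hT r v).support}).ncard with hd
  have hd1 : ∀ x ∈ X, 1 ≤ d x := by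
    intro x hx
    have : 0 < d x :=
      (Set.ncard_pos (Set.toFinite _)).2 ⟨x, hx, end_mem_support _⟩
    omega
  have hdk : ∀ v : V, d v ≤ k - 1 := by
    intro v
    have := h1 r v (treePth hT r v) (treePth_isPath hT r v)
    show (X ∩ {x : V | x ∈ (treePth hT r v).support}).ncard ≤ k - 1
    omega
  -- pigeonhole
  set F : Finset V := X.toFinite.toFinset with hF
  have hFcard : F.card = X.ncard := (Set.ncard_eq_toFinset_card X X.toFinite).symm
  have hmaps : ∀ x ∈ F, d x ∈ Finset.Icc 1 (k - 1) := by
    intro x hx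
    rw [Set.Finite.mem_toFinset] at hx
    exact Finset.mem_Icc.2 ⟨hd1 x hx, hdk x⟩
  have hlt : (Finset.Icc 1 (k - 1)).card * (k - 1) < F.card := by
    rw [Nat.card_Icc, hFcard]
    have h9 : k - 1 + 1 - 1 = k - 1 := by omega
    rw [h9]
    calc (k - 1) * (k - 1) < k * k := Nat.mul_lt_mul'' (by omega) (by omega)
      _ = k ^ 2 := (sq k).symm
      _ ≤ X.ncard := hX
  obtain ⟨i, _, hicard⟩ := Finset.exists_lt_card_fiber_of_mul_lt_card_of_maps_to hmaps hlt
  set A : Finset V := F.filter (fun x => d x = i) with hAdef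
  have hAcard : k ≤ A.card := by
    have : k - 1 < A.card := hicard
    omega
  have hAX : ∀ a ∈ A, a ∈ X ∧ d a = i := by
    intro a ha
    rw [hAdef, Finset.mem_filter, Set.Finite.mem_toFinset] at ha
    exact ha
  -- incomparability
  have hinc : ∀ a ∈ A, ∀ a' ∈ A, a ∈ (treePth hT r a').support → a = a' := by
    intro a ha a' ha' hmem
    by_contra hne
    have hss : (X ∩ {x : V | x ∈ (treePth hT r a).support}) ⊂
        (X ∩ {x : V | x ∈ (treePth hT r a').support}) := by
      constructor
      · intro x hx
        exact ⟨hx.1, support_treePth_subset hT hmem x hx.2⟩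
      · intro hsub
        have ha'mem : a' ∈ X ∩ {x : V | x ∈ (treePth hT r a').support} :=
          ⟨(hAX a' ha').1, end_mem_support _⟩
        have := (hsub ha'mem).2
        exact end_not_mem_treePth hT hmem hne this
    have hlt' : d a < d a' := Set.ncard_lt_ncard hss (Set.toFinite _)
    rw [(hAX a ha).2, (hAX a' ha').2] at hlt'
    omega
  -- no element of A equals r
  have hnr : ∀ a ∈ A, a ≠ r := by
    intro a ha har
    obtain ⟨a', ha', hne⟩ := Finset.exists_mem_ne (by omega : 1 < A.card) a
    have : a = a' := by
      apply hinc a ha a' ha'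
      rw [har]
      exact start_mem_support _
    exact hne this.symm
  -- the subtree
  set S : Set V := {v : V | ∃ a ∈ A, v ∈ (treePth hT r a).support} with hSdef
  have hSsupp : ∀ s ∈ S, ∀ x ∈ (treePth hT r s).support, x ∈ S := by
    rintro s ⟨a, ha, hs⟩ x hx
    exact ⟨a, ha, support_treePth_subset hT hs x hx⟩
  obtain ⟨a₀, ha₀⟩ : A.Nonempty := Finset.card_pos.1 (by omega)
  have hrS : r ∈ S := ⟨a₀, ha₀, start_mem_support _⟩
  have hSne : S.Nonempty := ⟨r, hrS⟩
  -- connectivity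
  have hconn : (T.induce S).Connected := by
    rw [connected_iff]
    refine ⟨?_, ⟨⟨r, hrS⟩⟩⟩
    rintro ⟨u, hu⟩ ⟨v, hv⟩
    have hru : (T.induce S).Reachable ⟨r, hrS⟩ ⟨u, hu⟩ :=
      reach_induce (treePth hT r u) hrS hu (hSsupp u hu)
    have hrv : (T.induce S).Reachable ⟨r, hrS⟩ ⟨v, hv⟩ :=
      reach_induce (treePth hT r v) hrS hv (hSsupp v hv)
    exact hru.symm.trans hrv
  -- decomposition lemma
  have hdec : ∀ a ∈ A, ∀ c ∈ S, T.Adj a c →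
      ∃ (q : T.Walk r c) (h : T.Adj c a), treePth hT r a = q.concat h := by
    intro a ha c hc hadj
    obtain ⟨a', ha', hca'⟩ := hc
    by_cases hmem : a ∈ (treePth hT r c).support
    · have haa' : a ∈ (treePth hT r a').support := by
        have hpc : c ∈ (treePth hT r a').support := hca'
        exact support_treePth_subset hT hpc a hmem
      have heq : a = a' := hinc a ha a' ha' haa'
      subst heq
      have hdrop : ((treePth hT r a).dropUntil c hca').IsPath :=
        (treePth_isPath hT r a).dropUntil hca'
      have hsingle : (Walk.cons hadj.symm Walk.nil : T.Walk c a).IsPath := by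
        simp [hadj.ne']
      have hduniq : ((treePth hT r a).dropUntil c hca')
          = (Walk.cons hadj.symm Walk.nil : T.Walk c a) :=
        (hT.existsUnique_path c a).unique hdrop hsingle
      refine ⟨(treePth hT r a).takeUntil c hca', hadj.symm, ?_⟩
      rw [concat_eq_append, ← hduniq, take_spec]
    · refine ⟨treePth hT r c, hadj.symm, ?_⟩
      symm
      apply treePth_unique
      rw [isPath_def, support_concat, List.nodup_append]
      refine ⟨(treePth_isPath hT r c).support_nodup, List.nodup_singleton a, ?_⟩
      intro x hx b hx' hxb
      rw [List.mem_singleton] at hx'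
      subst hx'
      exact hmem (hxb ▸ hx)
  -- each element of A is a leaf of S lying in X
  have hleaf : ∀ a ∈ A, a ∈ X ∩ {x : V | x ∈ S ∧ ∃! y, y ∈ S ∧ T.Adj x y} := by
    intro a ha
    obtain ⟨w, hadjw, p', hcons⟩ := Walk.exists_eq_cons_of_ne (Ne.symm (hnr a ha)) (treePth hT r a)
    obtain ⟨x, q, hx, heqc⟩ := Walk.exists_cons_eq_concat hadjw p'
    have hpa : treePth hT r a = q.concat hx := by rw [hcons, heqc]
    have hxS : x ∈ S := by
      refine ⟨a, ha, ?_⟩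
      rw [hpa, support_concat, List.mem_append]
      exact Or.inl (end_mem_support q)
    refine ⟨(hAX a ha).1, ⟨a, ha, end_mem_support _⟩, x, ⟨hxS, hx.symm⟩, ?_⟩
    rintro c ⟨hcS, hadjc⟩
    obtain ⟨q', h', heq'⟩ := hdec a ha c hcS hadjc
    have : q.concat hx = q'.concat h' := by rw [← hpa, heq']
    obtain ⟨hv, -⟩ := Walk.concat_inj this
    exact hv.symm
  -- conclude
  have hfin := h2 S hSne hconn
  have hsub : (A : Set V) ⊆ X ∩ {x : V | x ∈ S ∧ ∃! y, y ∈ S ∧ T.Adj x y} := by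
    intro a ha
    exact hleaf a ha
  have := Set.ncard_le_ncard hsub (Set.toFinite _)
  rw [Set.ncard_coe_finset] at this
  omega
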